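/- Let f : ℝⁿ × ℝᵐ → ℝ and g_i : ℝⁿ × ℝᵐ → ℝ (i ∈ I, I a finite index set) be differentiable, let U₀ ⊆ ℝⁿ be an open neighborhood of x̄, and let y : U₀ → ℝᵐ be differentiable at x̄. Suppose (i) g_i(x, y(x)) = 0 for all x ∈ U₀ and all i ∈ I (active constraints remain active), and (ii) there exist real numbers u_i ≥ 0 (i ∈ I) with ∇_y f(x̄, y(x̄)) + Σ_{i ∈ I} u_i ∇_y g_i(x̄, y(x̄)) = 0 (lower-level stationarity). Then the function φ(x) := f(x, y(x)) is differentiable at x̄ and ∇φ(x̄) = ∇_x f(x̄, y(x̄)) + Σ_{i ∈ I} u_i ∇_x g_i(x̄, y(x̄)). -/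

import Mathlib

open ContinuousLinearMap InnerProductSpace


/-- Gradient of the value function of the constrained lower-level problem along
the optimal solution function: under active-constraint invariance and
lower-level stationarity with multipliers u_i ≥ 0, the function
φ(x) := f(x,y(x)) is differentiable at x̄ with
∇φ(x̄) = ∇_x f(x̄,y(x̄)) + Σᵢ uᵢ ∇_x gᵢ(x̄,y(x̄)). -/
theorem stmt_10 {n m : ℕ} {ι : Type*} [Fintype ι]
    (f : EuclideanSpace ℝ (Fin n) → EuclideanSpace ℝ (Fin m) → ℝ)
    (g : ι → EuclideanSpace ℝ (Fin n) → EuclideanSpace ℝ (Fin m) → ℝ)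
    (hf : Differentiable ℝ
      (fun p : EuclideanSpace ℝ (Fin n) × EuclideanSpace ℝ (Fin m) => f p.1 p.2))
    (hg : ∀ i, Differentiable ℝ
      (fun p : EuclideanSpace ℝ (Fin n) × EuclideanSpace ℝ (Fin m) => g i p.1 p.2))
    (U₀ : Set (EuclideanSpace ℝ (Fin n))) (hU₀ : IsOpen U₀)
    (xb : EuclideanSpace ℝ (Fin n)) (hxb : xb ∈ U₀)
    (y : EuclideanSpace ℝ (Fin n) → EuclideanSpace ℝ (Fin m))
    (hy : DifferentiableAt ℝ y xb)
    (hactive : ∀ x ∈ U₀, ∀ i, g i x (y x) = 0)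
    (u : ι → ℝ) (hu : ∀ i, 0 ≤ u i)
    (hstat : gradient (fun y' => f xb y') (y xb) +
      ∑ i, u i • gradient (fun y' => g i xb y') (y xb) = 0) :
    DifferentiableAt ℝ (fun x => f x (y x)) xb ∧
      gradient (fun x => f x (y x)) xb =
        gradient (fun x => f x (y xb)) xb +
          ∑ i, u i • gradient (fun x => g i x (y xb)) xb := by
  classical
  let E := EuclideanSpace ℝ (Fin n)
  let F := EuclideanSpace ℝ (Fin m)
  have hyF := hy.hasFDerivAt
  set Dy := fderiv ℝ y xb with hDy
  have hpair : HasFDerivAt (fun x : E => (x, y x)) ((ContinuousLinearMap.id ℝ E).prod Dy) xb :=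
    (hasFDerivAt_id xb).prodMk hyF
  set A := fderiv ℝ (fun p : E × F => f p.1 p.2) (xb, y xb) with hA
  have hfA : HasFDerivAt (fun p : E × F => f p.1 p.2) A (xb, y xb) :=
    (hf (xb, y xb)).hasFDerivAt
  have hφ : HasFDerivAt (fun x => f x (y x)) (A.comp ((ContinuousLinearMap.id ℝ E).prod Dy)) xb :=
    by have := hfA.comp xb hpair; exact this
  have hfx : HasFDerivAt (fun x => f x (y xb)) (A.comp (inl ℝ E F)) xb :=
    by have := hfA.comp xb (hasFDerivAt_prodMk_left (𝕜 := ℝ) xb (y xb)); exact this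
  have hfy : HasFDerivAt (fun y' => f xb y') (A.comp (inr ℝ E F)) (y xb) :=
    by have := hfA.comp (y xb) (hasFDerivAt_prodMk_right xb (y xb)); exact this
  set B := fun i => fderiv ℝ (fun p : E × F => g i p.1 p.2) (xb, y xb) with hB
  have hgA : ∀ i, HasFDerivAt (fun p : E × F => g i p.1 p.2) (B i) (xb, y xb) :=
    fun i => ((hg i) (xb, y xb)).hasFDerivAt
  have hgx : ∀ i, HasFDerivAt (fun x => g i x (y xb)) ((B i).comp (inl ℝ E F)) xb :=
    fun i => by have := (hgA i).comp xb (hasFDerivAt_prodMk_left (𝕜 := ℝ) xb (y xb)); exact this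
  have hgy : ∀ i, HasFDerivAt (fun y' => g i xb y') ((B i).comp (inr ℝ E F)) (y xb) :=
    fun i => by have := (hgA i).comp (y xb) (hasFDerivAt_prodMk_right xb (y xb)); exact this
  have hgfull : ∀ i, HasFDerivAt (fun x => g i x (y x))
      ((B i).comp ((ContinuousLinearMap.id ℝ E).prod Dy)) xb :=
    fun i => by have := (hgA i).comp xb hpair; exact this
  have hzero : ∀ i, (B i).comp ((ContinuousLinearMap.id ℝ E).prod Dy) = 0 := by
    intro i
    have hev : (fun x => g i x (y x)) =ᶠ[nhds xb] (fun _ => (0:ℝ)) := by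
      filter_upwards [hU₀.mem_nhds hxb] with x hx using hactive x hx i
    have h1 : HasFDerivAt (fun x => g i x (y x)) (0 : E →L[ℝ] ℝ) xb :=
      (hasFDerivAt_const (0:ℝ) xb).congr_of_eventuallyEq hev
    exact (hgfull i).unique h1
  have hsplit : ∀ (C : (E × F) →L[ℝ] ℝ) (v : E),
      C.comp ((ContinuousLinearMap.id ℝ E).prod Dy) v = C (inl ℝ E F v) + C (inr ℝ E F (Dy v)) := by
    intro C v
    simp only [ContinuousLinearMap.comp_apply, ContinuousLinearMap.prod_apply,
      ContinuousLinearMap.id_apply, inl_apply, inr_apply]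
    rw [← map_add]
    congr 1
    simp [Prod.ext_iff]
  have hstatF : A.comp (inr ℝ E F) + ∑ i, u i • (B i).comp (inr ℝ E F) = 0 := by
    have := congrArg (toDual ℝ (EuclideanSpace ℝ (Fin m))) hstat
    simpa [gradient, hfy.fderiv, fun i => (hgy i).fderiv, map_add, map_sum, map_smul,
      ← hA, ← hB] using this
  have hkey : A.comp ((ContinuousLinearMap.id ℝ E).prod Dy)
      = A.comp (inl ℝ E F) + ∑ i, u i • (B i).comp (inl ℝ E F) := by
    ext v
    have h0 : ∀ i, B i (inl ℝ E F v) = -(B i (inr ℝ E F (Dy v))) := by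
      intro i
      have := hsplit (B i) v
      rw [hzero i] at this
      simp only [ContinuousLinearMap.zero_apply] at this
      linarith
    have h1 := ContinuousLinearMap.ext_iff.mp hstatF (Dy v)
    simp only [ContinuousLinearMap.add_apply, ContinuousLinearMap.sum_apply,
      ContinuousLinearMap.smul_apply, ContinuousLinearMap.comp_apply,
      ContinuousLinearMap.zero_apply, smul_eq_mul] at h1
    have h2 : ∑ i, u i * B i (inl ℝ E F v) = -∑ i, u i * B i (inr ℝ E F (Dy v)) := by
      rw [← Finset.sum_neg_distrib]
      exact Finset.sum_congr rfl fun i _ => by rw [h0 i]; ring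
    rw [hsplit A v]
    simp only [ContinuousLinearMap.add_apply, ContinuousLinearMap.sum_apply,
      ContinuousLinearMap.smul_apply, ContinuousLinearMap.comp_apply, smul_eq_mul]
    rw [h2]
    linarith
  refine ⟨hφ.differentiableAt, ?_⟩
  have hgrad : gradient (fun x => f x (y x)) xb
      = (toDual ℝ E).symm (A.comp ((ContinuousLinearMap.id ℝ E).prod Dy)) := by
    rw [gradient, hφ.fderiv]
  rw [hgrad, hkey, map_add, map_sum]
  congr 1
  · rw [gradient, hfx.fderiv]
  · refine Finset.sum_congr rfl fun i _ => ?_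
    rw [map_smul, gradient, (hgx i).fderiv]
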